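/- Let μ > 0, γ ∈ (0, 1) and λ > 0. The three quantities −1 − 1/λ, −1/γ² + 1/(λγ), and −(2μ/λ)·(1+γ)/(1−γ²) are all equal if and only if μ = 1/2 and λ = γ/(1−γ). In particular, for μ ≠ 1/2 there exist no γ ∈ (0,1), λ > 0 making them equal, while for μ = 1/2 every γ ∈ (0,1) with λ = γ/(1−γ) works. -/

import Mathlib

/-- The self-similarity compatibility conditions for the torus in dimension `n = 3`:
for `μ > 0`, `γ ∈ (0,1)`, `λ > 0`, the three quantities `−1 − 1/λ`, `−1/γ² + 1/(λγ)`
and `−(2μ/λ)(1+γ)/(1−γ²)` are all equal iff `μ = 1/2` and `λ = γ/(1−γ)`. -/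
theorem torus_self_similar_compatibility
    (μ γ lam : ℝ) (hμ : 0 < μ) (hγ : γ ∈ Set.Ioo (0:ℝ) 1) (hlam : 0 < lam) :
    ((-1 - 1 / lam = -1 / γ ^ 2 + 1 / (lam * γ)) ∧
      (-1 / γ ^ 2 + 1 / (lam * γ) = -(2 * μ / lam) * ((1 + γ) / (1 - γ ^ 2)))) ↔
    (μ = 1/2 ∧ lam = γ / (1 - γ)) := by
  obtain ⟨hγ0, hγ1⟩ := hγ
  have hγne : γ ≠ 0 := ne_of_gt hγ0
  have hlne : lam ≠ 0 := ne_of_gt hlam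
  have h1γ : (0:ℝ) < 1 - γ := by linarith
  have h1γne : (1:ℝ) - γ ≠ 0 := ne_of_gt h1γ
  have hsq : (1:ℝ) - γ ^ 2 ≠ 0 := by nlinarith
  constructor
  · rintro ⟨h1, h2⟩
    have hl : lam = γ / (1 - γ) := by
      field_simp at h1 ⊢
      have key : lam * γ * (1 + γ) * (lam * (1 - γ) - γ) = 0 := by linear_combination (lam * γ) * h1
      have hpos : lam * γ * (1 + γ) ≠ 0 := by positivity
      have := (mul_eq_zero.mp key).resolve_left hpos
      linarith
    subst hl
    have h2' := h2
    field_simp at h2'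
    refine ⟨?_, rfl⟩
    have key : γ ^ 4 * (1 - γ ^ 2) * (2 * μ - 1) = 0 := by linear_combination γ ^ 3 * h2'
    have hpos : γ ^ 4 * (1 - γ ^ 2) ≠ 0 := by
      have : (0:ℝ) < 1 - γ ^ 2 := by nlinarith
      positivity
    have := (mul_eq_zero.mp key).resolve_left hpos
    linarith
  · rintro ⟨hm, hl⟩
    subst hm hl
    constructor <;> field_simp <;> ring
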